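/- arXiv:1805.04484 — 2 statements merged into one kernel-verified Lean document; each statement's English description precedes it below -/
import Mathlib

section
/- Let 𝒮 ⊂ ℝ² be a finite set containing two linearly independent vectors and let 𝕊 := Span_ℤ 𝒮 be the set of all finite integer linear combinations of elements of 𝒮. For n ∈ ℕ define S_n := { Σ_{k=1}^M λ_k ξ_k : M ∈ ℕ, ξ_k ∈ 𝕊 and λ_k > 0 for all k, and n² λ_j / (Σ_{k=1}^M λ_k) ∈ ℕ for every j }. Then the union ⋃_{n ∈ ℕ} S_n is dense in ℝ². -/
open MeasureTheory Real Filter Set Metric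
open scoped Topology

noncomputable section

abbrev E2 : Type := EuclideanSpace ℝ (Fin 2)

def Sn (𝒮 : Set E2) (n : ℕ) : Set E2 :=
  {ξ | ∃ (M : ℕ) (lam : Fin M → ℝ) (ξs : Fin M → E2),
    (∀ k, 0 < lam k) ∧ (∀ k, ξs k ∈ Submodule.span ℤ 𝒮) ∧
    ξ = ∑ k, lam k • ξs k ∧
    ∀ j, ∃ m : ℕ, (n : ℝ)^2 * lam j / (∑ k, lam k) = m}

lemma aux_floor_tendsto (α : ℝ) :
    Tendsto (fun N : ℕ => (⌊(N : ℝ) * α⌋ : ℝ) / N) atTop (𝓝 α) := by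
  have h1 : Tendsto (fun N : ℕ => α - Int.fract ((N : ℝ) * α) / N) atTop (𝓝 α) := by
    have h0 : Tendsto (fun N : ℕ => Int.fract ((N : ℝ) * α) / N) atTop (𝓝 0) := by
      apply squeeze_zero (fun N => div_nonneg (Int.fract_nonneg _) (Nat.cast_nonneg _)) (fun N => ?_)
        tendsto_one_div_atTop_nhds_zero_nat
      rcases Nat.eq_zero_or_pos N with h | h
      · simp [h]
      · exact div_le_div_of_nonneg_right (le_of_lt (Int.fract_lt_one _)) (by positivity) |>.trans
          (le_of_eq rfl)
    simpa using tendsto_const_nhds.sub h0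
  refine h1.congr' ?_
  filter_upwards [eventually_gt_atTop 0] with N hN
  have hN' : (N : ℝ) ≠ 0 := by positivity
  rw [← Int.self_sub_fract ((N : ℝ) * α), sub_div, mul_div_cancel_left₀ _ hN']

/-- Lemma 4.4 (Lemma `lemma mis0`): the union of the sets `S_n` is dense in `ℝ²`. -/
theorem union_Sn_dense (𝒮 : Set E2) (hfin : 𝒮.Finite)
    (hindep : ∃ b₁ ∈ 𝒮, ∃ b₂ ∈ 𝒮, LinearIndependent ℝ ![b₁, b₂]) :
    Dense (⋃ n : ℕ, Sn 𝒮 n) := by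
  obtain ⟨b₁, hb₁, b₂, hb₂, hli⟩ := hindep
  intro x
  have hcard : Fintype.card (Fin 2) = Module.finrank ℝ E2 := by
    simp [finrank_euclideanSpace]
  let B := basisOfLinearIndependentOfCardEqFinrank hli hcard
  set α := B.repr x 0 with hα
  set β := B.repr x 1 with hβ
  have hx : x = α • b₁ + β • b₂ := by
    have := B.sum_repr x
    rw [Fin.sum_univ_two] at this
    have h0 : B 0 = b₁ := by
      simp [B, coe_basisOfLinearIndependentOfCardEqFinrank]
    have h1 : B 1 = b₂ := by
      simp [B, coe_basisOfLinearIndependentOfCardEqFinrank]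
    rw [h0, h1] at this
    exact this.symm
  have htend : Tendsto (fun N : ℕ =>
      ((⌊(N : ℝ) * α⌋ : ℝ) / N) • b₁ + ((⌊(N : ℝ) * β⌋ : ℝ) / N) • b₂) atTop (𝓝 x) := by
    rw [hx]
    exact (((aux_floor_tendsto α).smul_const b₁).add ((aux_floor_tendsto β).smul_const b₂))
  refine mem_closure_of_tendsto htend ?_
  filter_upwards [eventually_gt_atTop 0] with N hN
  have hNpos : (0 : ℝ) < N := by exact_mod_cast hN
  refine mem_iUnion.2 ⟨1, ?_⟩
  refine ⟨1, fun _ => 1 / N, fun _ => (⌊(N : ℝ) * α⌋ : ℤ) • b₁ + (⌊(N : ℝ) * β⌋ : ℤ) • b₂,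
    fun _ => by positivity, fun _ => ?_, ?_, fun j => ⟨1, ?_⟩⟩
  · exact Submodule.add_mem _
      (Submodule.smul_mem _ _ (Submodule.subset_span hb₁))
      (Submodule.smul_mem _ _ (Submodule.subset_span hb₂))
  · rw [Fin.sum_univ_one]
    have h : ∀ (c : ℤ) (v : E2), (1 / (N : ℝ)) • (c • v) = ((c : ℝ) / N) • v := by
      intro c v
      rw [← Int.cast_smul_eq_zsmul ℝ, smul_smul]
      congr 1
      ring
    rw [smul_add, h, h]
  · rw [Fin.sum_univ_one]
    have : (1 : ℝ) / N ≠ 0 := by positivity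
    field_simp
    exact Nat.cast_one
end
end

section
/- There exists a constant C > 0 such that C⁻¹|ξ| ≤ φ(ξ) ≤ C|ξ| for every ξ ∈ ℝ². -/
open MeasureTheory Real Filter Set Metric
open scoped Topology

noncomputable section

/-- The set whose infimum defines the relaxed density `φ(ξ)`. -/
def phiSet (𝒮 : Set E2) (ψ : E2 → ℝ) (ξ : E2) : Set ℝ :=
  {t | ∃ (N : ℕ) (lam : Fin N → ℝ) (ξs : Fin N → E2),
    (∀ k, 0 ≤ lam k) ∧ (∀ k, ξs k ∈ Submodule.span ℤ 𝒮) ∧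
    (∑ k, lam k • ξs k) = ξ ∧ t = ∑ k, lam k * ψ (ξs k)}

/-- The relaxed density `φ(ξ) := inf { ∑ λ_k ψ(ξ_k) : ∑ λ_k ξ_k = ξ, λ_k ≥ 0, ξ_k ∈ 𝕊 }`. -/
def phi (𝒮 : Set E2) (ψ : E2 → ℝ) (ξ : E2) : ℝ := sInf (phiSet 𝒮 ψ ξ)

lemma real_sign_mul_abs (x : ℝ) : Real.sign x * |x| = x := by
  rcases lt_trichotomy x 0 with h | h | h
  · rw [Real.sign_of_neg h, abs_of_neg h]; ring
  · simp [h]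
  · rw [Real.sign_of_pos h, abs_of_pos h]; ring

lemma abs_real_sign_le_one (x : ℝ) : |Real.sign x| ≤ 1 := by
  rcases lt_trichotomy x 0 with h | h | h
  · rw [Real.sign_of_neg h]; norm_num
  · rw [h, Real.sign_zero]; norm_num
  · rw [Real.sign_of_pos h]; norm_num

/-- Proposition 3.5 (part): there is a constant  with
 for every . -/
theorem phi_bounds (𝒮 : Set E2) (hfin : 𝒮.Finite)
    (hindep : ∃ b₁ ∈ 𝒮, ∃ b₂ ∈ 𝒮, LinearIndependent ℝ ![b₁, b₂])
    (hdisc : ∃ δ > 0, ∀ ξ ∈ Submodule.span ℤ 𝒮, ξ ≠ 0 → δ ≤ ‖ξ‖)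
    (ψ : E2 → ℝ) (c : ℝ) (hc : 0 < c)
    (hψ : ∀ ξ : E2, c⁻¹ * ‖ξ‖^2 ≤ ψ ξ ∧ ψ ξ ≤ c * ‖ξ‖^2) :
    ∃ C > 0, ∀ ξ : E2, C⁻¹ * ‖ξ‖ ≤ phi 𝒮 ψ ξ ∧ phi 𝒮 ψ ξ ≤ C * ‖ξ‖ := by
  obtain ⟨b₁, hb₁, b₂, hb₂, hind⟩ := hindep
  obtain ⟨δ, hδ, hdisc⟩ := hdisc
  have hψ0 : ∀ η : E2, 0 ≤ ψ η := fun η => le_trans (by positivity) (hψ η).1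
  -- pointwise lower bound for ψ on the lattice
  have hlow : ∀ η : E2, η ∈ Submodule.span ℤ 𝒮 → δ / c * ‖η‖ ≤ ψ η := by
    intro η hη
    rcases eq_or_ne η 0 with rfl | hne
    · simpa using hψ0 0
    · have hδη := hdisc η hη hne
      calc δ / c * ‖η‖ ≤ ‖η‖ / c * ‖η‖ := by gcongr
        _ = c⁻¹ * ‖η‖ ^ 2 := by ring
        _ ≤ ψ η := (hψ η).1
  -- every element of phiSet is bounded below
  have hmem_lb : ∀ ξ : E2, ∀ t ∈ phiSet 𝒮 ψ ξ, δ / c * ‖ξ‖ ≤ t := by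
    intro ξ t ht
    obtain ⟨N, lam, ξs, hlam, hspan, hsum, rfl⟩ := ht
    have hdc : (0:ℝ) ≤ δ / c := by positivity
    calc δ / c * ‖ξ‖ = δ / c * ‖∑ k, lam k • ξs k‖ := by rw [hsum]
      _ ≤ δ / c * ∑ k, ‖lam k • ξs k‖ :=
          mul_le_mul_of_nonneg_left (norm_sum_le _ _) hdc
      _ = ∑ k, lam k * (δ / c * ‖ξs k‖) := by
          rw [Finset.mul_sum]
          refine Finset.sum_congr rfl fun k _ => ?_
          rw [norm_smul, Real.norm_eq_abs, abs_of_nonneg (hlam k)]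
          ring
      _ ≤ ∑ k, lam k * ψ (ξs k) :=
          Finset.sum_le_sum fun k _ =>
            mul_le_mul_of_nonneg_left (hlow _ (hspan k)) (hlam k)
  -- basis of E2 from the two independent vectors
  have hcard : Fintype.card (Fin 2) = Module.finrank ℝ E2 := by
    simp [finrank_euclideanSpace]
  let B : Module.Basis (Fin 2) ℝ E2 := basisOfLinearIndependentOfCardEqFinrank hind hcard
  have hBcoe : ⇑B = ![b₁, b₂] := coe_basisOfLinearIndependentOfCardEqFinrank hind hcard
  have hB : ∀ i, B i ∈ 𝒮 := by
    intro i
    show (⇑B) i ∈ 𝒮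
    rw [hBcoe]
    fin_cases i <;> simpa
  -- coordinate bounds
  set K : Fin 2 → ℝ := fun i => ‖LinearMap.toContinuousLinearMap (B.coord i)‖ with hKdef
  have hK : ∀ (ξ : E2) (i : Fin 2), |B.repr ξ i| ≤ K i * ‖ξ‖ := by
    intro ξ i
    have h := (LinearMap.toContinuousLinearMap (B.coord i)).le_opNorm ξ
    simpa [Real.norm_eq_abs, Module.Basis.coord_apply] using h
  have hK0 : ∀ i, 0 ≤ K i := fun i => norm_nonneg _
  -- the explicit competitor
  have hmem : ∀ ξ : E2,
      (∑ i : Fin 2, |B.repr ξ i| * ψ (Real.sign (B.repr ξ i) • B i)) ∈ phiSet 𝒮 ψ ξ := by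
    intro ξ
    refine ⟨2, fun i => |B.repr ξ i|, fun i => Real.sign (B.repr ξ i) • B i,
      fun i => abs_nonneg _, ?_, ?_, rfl⟩
    · intro i
      dsimp only
      rcases lt_trichotomy (B.repr ξ i) 0 with h | h | h
      · rw [Real.sign_of_neg h, neg_one_smul]
        exact Submodule.neg_mem _ (Submodule.subset_span (hB i))
      · rw [h, Real.sign_zero, zero_smul]
        exact Submodule.zero_mem _
      · rw [Real.sign_of_pos h, one_smul]
        exact Submodule.subset_span (hB i)
    · have hterm : ∀ i : Fin 2,
          |B.repr ξ i| • (Real.sign (B.repr ξ i) • B i) = B.repr ξ i • B i := by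
        intro i
        rw [smul_smul, mul_comm, real_sign_mul_abs]
      simp_rw [hterm]
      exact B.sum_repr ξ
  -- upper bound constant
  set M : ℝ := ∑ i : Fin 2, K i * c * ‖B i‖ ^ 2 with hMdef
  have hM0 : 0 ≤ M := Finset.sum_nonneg fun i _ => by positivity
  have hupper : ∀ ξ : E2,
      (∑ i : Fin 2, |B.repr ξ i| * ψ (Real.sign (B.repr ξ i) • B i)) ≤ M * ‖ξ‖ := by
    intro ξ
    have hterm : ∀ i : Fin 2,
        |B.repr ξ i| * ψ (Real.sign (B.repr ξ i) • B i) ≤ K i * c * ‖B i‖ ^ 2 * ‖ξ‖ := by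
      intro i
      have h1 : ψ (Real.sign (B.repr ξ i) • B i) ≤ c * ‖B i‖ ^ 2 := by
        refine le_trans (hψ _).2 ?_
        have h2 : ‖Real.sign (B.repr ξ i) • B i‖ ≤ ‖B i‖ := by
          rw [norm_smul, Real.norm_eq_abs]
          calc |Real.sign (B.repr ξ i)| * ‖B i‖ ≤ 1 * ‖B i‖ :=
                mul_le_mul_of_nonneg_right (abs_real_sign_le_one _) (norm_nonneg _)
            _ = ‖B i‖ := one_mul _
        have : ‖Real.sign (B.repr ξ i) • B i‖ ^ 2 ≤ ‖B i‖ ^ 2 := by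
          exact pow_le_pow_left₀ (norm_nonneg _) h2 2
        nlinarith
      calc |B.repr ξ i| * ψ (Real.sign (B.repr ξ i) • B i)
          ≤ (K i * ‖ξ‖) * (c * ‖B i‖ ^ 2) :=
            mul_le_mul (hK ξ i) h1 (hψ0 _) (by positivity)
        _ = K i * c * ‖B i‖ ^ 2 * ‖ξ‖ := by ring
    calc (∑ i : Fin 2, |B.repr ξ i| * ψ (Real.sign (B.repr ξ i) • B i))
        ≤ ∑ i : Fin 2, K i * c * ‖B i‖ ^ 2 * ‖ξ‖ := Finset.sum_le_sum fun i _ => hterm i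
      _ = M * ‖ξ‖ := by rw [hMdef, Finset.sum_mul]
  -- conclusion
  refine ⟨max (c / δ) (M + 1), lt_of_lt_of_le (div_pos hc hδ) (le_max_left _ _), fun ξ => ?_⟩
  have hCpos : (0:ℝ) < max (c / δ) (M + 1) :=
    lt_of_lt_of_le (div_pos hc hδ) (le_max_left _ _)
  have hne : (phiSet 𝒮 ψ ξ).Nonempty := ⟨_, hmem ξ⟩
  have hbdd : BddBelow (phiSet 𝒮 ψ ξ) := ⟨δ / c * ‖ξ‖, hmem_lb ξ⟩
  constructor
  · have h1 : δ / c * ‖ξ‖ ≤ phi 𝒮 ψ ξ := le_csInf hne (hmem_lb ξ)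
    have h2 : (max (c / δ) (M + 1))⁻¹ ≤ δ / c := by
      rw [← inv_div c δ]
      exact inv_anti₀ (div_pos hc hδ) (le_max_left _ _)
    exact le_trans (mul_le_mul_of_nonneg_right h2 (norm_nonneg _)) h1
  · have h1 : phi 𝒮 ψ ξ ≤ ∑ i : Fin 2, |B.repr ξ i| * ψ (Real.sign (B.repr ξ i) • B i) :=
      csInf_le hbdd (hmem ξ)
    have h2 : M * ‖ξ‖ ≤ max (c / δ) (M + 1) * ‖ξ‖ := by
      apply mul_le_mul_of_nonneg_right _ (norm_nonneg _)
      exact le_trans (by linarith) (le_max_right _ _)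
    exact le_trans h1 (le_trans (hupper ξ) h2)
end
end
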